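/- Let a_1 ≤ a_2, a_1' ≥ a_2', b_1 ≤ b_2, b_1' ≥ b_2' be integers. The number of pairs of vertex-disjoint lattice paths (using unit steps in positive coordinate directions) from (a_1,a_1') to (b_1,b_1') and from (a_2,a_2') to (b_2,b_2') equals the 2×2 determinant det( C(b_j - a_i + b_j' - a_i', b_j - a_i) )_{1≤i,j≤2}. -/

import Mathlib

def LatticeStep (a b : ℤ × ℤ) : Prop :=
  b = (a.1 + 1, a.2) ∨ b = (a.1, a.2 + 1)

def IsLatticePath (p q : ℤ × ℤ) (L : List (ℤ × ℤ)) : Prop :=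
  L.head? = some p ∧ L.getLast? = some q ∧ L.Chain' LatticeStep

def chooseInt (x y : ℤ) : ℤ :=
  if 0 ≤ y ∧ y ≤ x then (Nat.choose x.toNat y.toNat : ℤ) else 0

namespace LGV

lemma step_level {x y : ℤ × ℤ} (h : LatticeStep x y) : y.1 + y.2 = x.1 + x.2 + 1 := by
  rcases h with h | h <;> (simp [h]; ring)

lemma step_mono {x y : ℤ × ℤ} (h : LatticeStep x y) :
    x.1 ≤ y.1 ∧ x.2 ≤ y.2 ∧ y.1 ≤ x.1 + 1 ∧ y.2 ≤ x.2 + 1 := by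
  rcases h with h | h <;> simp [h] <;> omega

lemma path_ne_nil {p q : ℤ × ℤ} {L : List (ℤ × ℤ)} (h : IsLatticePath p q L) : L ≠ [] := by
  intro e; rw [e] at h; simp [IsLatticePath] at h

lemma path_singleton_iff {p q x : ℤ × ℤ} : IsLatticePath p q [x] ↔ p = x ∧ q = x := by
  constructor
  · rintro ⟨h1, h2, _⟩; simp at h1 h2; exact ⟨h1.symm, h2.symm⟩
  · rintro ⟨rfl, rfl⟩; refine ⟨rfl, rfl, ?_⟩; exact List.isChain_singleton _

lemma path_cons {p q x y : ℤ × ℤ} {M : List (ℤ × ℤ)} (h : IsLatticePath p q (x :: y :: M)) :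
    x = p ∧ LatticeStep p y ∧ IsLatticePath y q (y :: M) := by
  obtain ⟨h1, h2, h3⟩ := h
  simp at h1
  subst h1
  change List.IsChain _ _ at h3
  rw [List.isChain_cons_cons] at h3
  rw [List.getLast?_cons_cons] at h2
  exact ⟨rfl, h3.1, rfl, h2, h3.2⟩

lemma path_cons' {p q y : ℤ × ℤ} {M : List (ℤ × ℤ)} (hs : LatticeStep p y)
    (h : IsLatticePath y q (y :: M)) : IsLatticePath p q (p :: y :: M) := by
  obtain ⟨h1, h2, h3⟩ := h
  refine ⟨rfl, ?_, ?_⟩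
  · rw [List.getLast?_cons_cons]; exact h2
  · change List.IsChain _ _; rw [List.isChain_cons_cons]; exact ⟨hs, h3⟩

lemma path_rel {R : ℤ × ℤ → ℤ × ℤ → Prop} (hT : Transitive R) (hRefl : ∀ x, R x x)
    (hS : ∀ x y, LatticeStep x y → R x y) :
    ∀ (L : List (ℤ × ℤ)) (p q : ℤ × ℤ), IsLatticePath p q L → ∀ z ∈ L, R p z ∧ R z q := by
  intro L
  induction L with
  | nil => intro p q h; exact absurd rfl (path_ne_nil h)
  | cons x M ih =>
    intro p q h z hz
    match M with
    | [] =>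
      obtain ⟨rfl, rfl⟩ := path_singleton_iff.1 h
      simp at hz; subst hz; exact ⟨hRefl _, hRefl _⟩
    | y :: M' =>
      obtain ⟨rfl, hstep, hpath⟩ := path_cons h
      rcases List.mem_cons.1 hz with rfl | hz
      · refine ⟨hRefl _, ?_⟩
        have := ih y q hpath y (by simp)
        exact hT (hS _ _ hstep) this.2
      · have := ih y q hpath z hz
        exact ⟨hT (hS _ _ hstep) this.1, this.2⟩

lemma path_mem_bounds {p q z : ℤ × ℤ} {L : List (ℤ × ℤ)} (h : IsLatticePath p q L)
    (hz : z ∈ L) : p.1 ≤ z.1 ∧ p.2 ≤ z.2 ∧ z.1 ≤ q.1 ∧ z.2 ≤ q.2 := by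
  have := path_rel (R := fun a b => a.1 ≤ b.1 ∧ a.2 ≤ b.2)
    (fun a b c hab hbc => ⟨hab.1.trans hbc.1, hab.2.trans hbc.2⟩)
    (fun x => ⟨le_refl _, le_refl _⟩)
    (fun x y hs => ⟨(step_mono hs).1, (step_mono hs).2.1⟩) L p q h z hz
  exact ⟨this.1.1, this.1.2, this.2.1, this.2.2⟩

lemma path_head_mem {p q : ℤ × ℤ} {L : List (ℤ × ℤ)} (h : IsLatticePath p q L) : p ∈ L := by
  have h1 := h.1
  cases L with
  | nil => simp at h1
  | cons x M => simp at h1; subst h1; simp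

lemma path_last_mem {p q : ℤ × ℤ} {L : List (ℤ × ℤ)} (h : IsLatticePath p q L) : q ∈ L := by
  obtain ⟨hne, he⟩ := List.mem_getLast?_eq_getLast (x := q) (by rw [h.2.1]; rfl)
  rw [he]; exact List.getLast_mem hne

lemma path_mono {p q : ℤ × ℤ} {L : List (ℤ × ℤ)} (h : IsLatticePath p q L) :
    p.1 ≤ q.1 ∧ p.2 ≤ q.2 := by
  have := path_mem_bounds h (path_last_mem h)
  exact ⟨this.1, this.2.1⟩

lemma path_pairwise {p q : ℤ × ℤ} {L : List (ℤ × ℤ)} (h : IsLatticePath p q L) :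
    L.Pairwise (fun a b => a.1 + a.2 < b.1 + b.2) := by
  have hc : L.Chain' (fun a b => a.1 + a.2 < b.1 + b.2) :=
    h.2.2.imp (fun a b hab => by have := step_level hab; omega)
  haveI : IsTrans (ℤ × ℤ) (fun a b => a.1 + a.2 < b.1 + b.2) := ⟨fun a b c h1 h2 => by omega⟩
  exact List.isChain_iff_pairwise.1 hc

lemma path_nodup {p q : ℤ × ℤ} {L : List (ℤ × ℤ)} (h : IsLatticePath p q L) : L.Nodup :=
  (path_pairwise h).imp (fun hlt => by intro e; rw [e] at hlt; omega)

lemma exists_mem_level {p q : ℤ × ℤ} {L : List (ℤ × ℤ)} (h : IsLatticePath p q L)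
    {t : ℤ} (h1 : p.1 + p.2 ≤ t) (h2 : t ≤ q.1 + q.2) : ∃ z ∈ L, z.1 + z.2 = t := by
  induction L generalizing p with
  | nil => exact absurd rfl (path_ne_nil h)
  | cons x M ih =>
    match M with
    | [] =>
      obtain ⟨hp, hq⟩ := path_singleton_iff.1 h
      refine ⟨x, by simp, ?_⟩
      subst hp; subst hq; omega
    | y :: M' =>
      obtain ⟨hxp, hstep, hpath⟩ := path_cons h
      subst hxp
      rcases eq_or_lt_of_le h1 with he | hlt
      · exact ⟨x, by simp, he⟩
      · have hy := step_level hstep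
        obtain ⟨z, hz, hzt⟩ := ih hpath (by omega)
        exact ⟨z, by simp [hz], hzt⟩

end LGV

namespace LGV

lemma path_empty_of_not_le {p q : ℤ × ℤ} (h : ¬(p.1 ≤ q.1 ∧ p.2 ≤ q.2)) :
    {L | IsLatticePath p q L} = ∅ := by
  ext L
  simp only [Set.mem_setOf_eq, Set.mem_empty_iff_false, iff_false]
  intro hL; exact h (path_mono hL)

lemma path_eq_singleton {p : ℤ × ℤ} : {L | IsLatticePath p p L} = {[p]} := by
  ext L
  simp only [Set.mem_setOf_eq, Set.mem_singleton_iff]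
  constructor
  · intro hL
    match L with
    | [] => exact absurd rfl (path_ne_nil hL)
    | [x] => obtain ⟨h1, _⟩ := path_singleton_iff.1 hL; rw [h1]
    | x :: y :: M =>
      obtain ⟨rfl, hs, hp⟩ := path_cons hL
      have h1 := step_level hs
      have h2 := path_mono hp
      omega
  · rintro rfl; exact path_singleton_iff.2 ⟨rfl, rfl⟩

lemma chooseInt_pascal {dx dy : ℤ} (hx : 0 ≤ dx) (hy : 0 ≤ dy) (h1 : 1 ≤ dx + dy) :
    chooseInt (dx + dy) dx = chooseInt (dx + dy - 1) (dx - 1) + chooseInt (dx + dy - 1) dx := by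
  rcases eq_or_lt_of_le hx with hx0 | hx1
  · rw [← hx0]
    rw [chooseInt, if_pos (by omega), chooseInt, if_neg (by omega), chooseInt, if_pos (by omega)]
    simp
  rcases eq_or_lt_of_le hy with hy0 | hy1
  · rw [← hy0]
    rw [chooseInt, if_pos (by omega), chooseInt, if_pos (by omega), chooseInt, if_neg (by omega)]
    have e1 : (dx + 0).toNat = dx.toNat := by omega
    have e2 : (dx + 0 - 1).toNat = (dx - 1).toNat := by omega
    rw [e1, e2]
    have e3 : (dx - 1).toNat = (dx - 1).toNat := rfl
    rw [Nat.choose_self, Nat.choose_self]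
    simp
  · obtain ⟨a, ha⟩ : ∃ a : ℕ, dx = (a : ℤ) + 1 := ⟨(dx - 1).toNat, by omega⟩
    obtain ⟨b, hbb⟩ : ∃ b : ℕ, dy = (b : ℤ) + 1 := ⟨(dy - 1).toNat, by omega⟩
    subst ha; subst hbb
    rw [chooseInt, if_pos (by omega), chooseInt, if_pos (by omega), chooseInt, if_pos (by omega)]
    have e1 : ((a : ℤ) + 1 + ((b : ℤ) + 1)).toNat = a + b + 2 := by omega
    have e2 : ((a : ℤ) + 1).toNat = a + 1 := by omega
    have e3 : ((a : ℤ) + 1 + ((b : ℤ) + 1) - 1).toNat = a + b + 1 := by omega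
    have e4 : ((a : ℤ) + 1 - 1).toNat = a := by omega
    rw [e1, e2, e3, e4]
    have : (a + b + 2).choose (a + 1) = (a + b + 1).choose a + (a + b + 1).choose (a + 1) := by
      have := Nat.choose_succ_succ (a + b + 1) a
      simpa [Nat.succ_eq_add_one] using this
    rw [this]; push_cast; ring

lemma path_count : ∀ (n : ℕ) (p q : ℤ × ℤ), q.1 + q.2 - (p.1 + p.2) = (n : ℤ) →
    {L | IsLatticePath p q L}.Finite ∧
      ({L | IsLatticePath p q L}.ncard : ℤ)
        = chooseInt (q.1 - p.1 + (q.2 - p.2)) (q.1 - p.1) := by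
  intro n
  induction n with
  | zero =>
    intro p q hn
    by_cases hle : p.1 ≤ q.1 ∧ p.2 ≤ q.2
    · have hpq : p = q := by
        have : p.1 = q.1 ∧ p.2 = q.2 := by push_cast at hn; omega
        exact Prod.ext this.1 this.2
      subst hpq
      rw [path_eq_singleton]
      refine ⟨Set.finite_singleton _, ?_⟩
      rw [Set.ncard_singleton]
      rw [chooseInt, if_pos (by omega)]
      simp
    · rw [path_empty_of_not_le hle]
      refine ⟨Set.finite_empty, ?_⟩
      rw [Set.ncard_empty, chooseInt, if_neg (by push_cast at hn; omega)]
      simp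
  | succ n ih =>
    intro p q hn
    by_cases hle : p.1 ≤ q.1 ∧ p.2 ≤ q.2
    · set p1 : ℤ × ℤ := (p.1 + 1, p.2) with hp1
      set p2 : ℤ × ℤ := (p.1, p.2 + 1) with hp2
      have hn1 : q.1 + q.2 - (p1.1 + p1.2) = (n : ℤ) := by simp [hp1]; push_cast at hn ⊢; omega
      have hn2 : q.1 + q.2 - (p2.1 + p2.2) = (n : ℤ) := by simp [hp2]; push_cast at hn ⊢; omega
      obtain ⟨hf1, hc1⟩ := ih p1 q hn1
      obtain ⟨hf2, hc2⟩ := ih p2 q hn2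
      have hset : {L | IsLatticePath p q L}
          = (List.cons p) '' ({L | IsLatticePath p1 q L} ∪ {L | IsLatticePath p2 q L}) := by
        ext L
        simp only [Set.mem_setOf_eq, Set.mem_image, Set.mem_union]
        constructor
        · intro hL
          match L with
          | [] => exact absurd rfl (path_ne_nil hL)
          | [x] =>
            obtain ⟨h1, h2⟩ := path_singleton_iff.1 hL
            subst h1; rw [← h2] at hn; push_cast at hn; omega
          | x :: y :: M =>
            obtain ⟨rfl, hs, hp⟩ := path_cons hL
            refine ⟨y :: M, ?_, rfl⟩
            rcases hs with hs | hs
            · left; show IsLatticePath p1 q _; rw [hp1, ← hs]; exact hp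
            · right; show IsLatticePath p2 q _; rw [hp2, ← hs]; exact hp
        · rintro ⟨M, hM, rfl⟩
          match M with
          | [] => rcases hM with hM | hM <;> exact absurd rfl (path_ne_nil hM)
          | y :: M' =>
            rcases hM with hM | hM
            · have hy : y = p1 := by have := hM.1; simpa using this
              subst hy
              exact path_cons' (Or.inl rfl) hM
            · have hy : y = p2 := by have := hM.1; simpa using this
              subst hy
              exact path_cons' (Or.inr rfl) hM
      have hdisj : Disjoint {L | IsLatticePath p1 q L} {L | IsLatticePath p2 q L} := by
        rw [Set.disjoint_left]
        intro L h1 h2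
        have e1 := h1.1
        have e2 := h2.1
        rw [e1] at e2
        have : p1 = p2 := by injection e2
        rw [hp1, hp2, Prod.mk.injEq] at this
        omega
      rw [hset]
      refine ⟨((hf1.union hf2).image _), ?_⟩
      rw [Set.ncard_image_of_injective _ (List.cons_injective),
        Set.ncard_union_eq hdisj hf1 hf2]
      push_cast
      rw [hc1, hc2]
      have e1 : q.1 - p1.1 + (q.2 - p1.2) = q.1 - p.1 + (q.2 - p.2) - 1 := by simp [hp1]; ring
      have e2 : q.1 - p1.1 = q.1 - p.1 - 1 := by simp [hp1]; ring
      have e3 : q.1 - p2.1 + (q.2 - p2.2) = q.1 - p.1 + (q.2 - p.2) - 1 := by simp [hp2]; ring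
      have e4 : q.1 - p2.1 = q.1 - p.1 := by simp [hp2]
      rw [e1, e2, e3, e4]
      exact (chooseInt_pascal (show (0:ℤ) ≤ q.1 - p.1 by omega)
        (show (0:ℤ) ≤ q.2 - p.2 by omega)
        (by push_cast at hn; omega)).symm
    · rw [path_empty_of_not_le hle]
      refine ⟨Set.finite_empty, ?_⟩
      rw [Set.ncard_empty, chooseInt, if_neg (by push_cast at hn; omega)]
      simp

lemma path_count' (p q : ℤ × ℤ) :
    {L | IsLatticePath p q L}.Finite ∧
      ({L | IsLatticePath p q L}.ncard : ℤ)
        = chooseInt (q.1 - p.1 + (q.2 - p.2)) (q.1 - p.1) := by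
  by_cases h : p.1 + p.2 ≤ q.1 + q.2
  · exact path_count (q.1 + q.2 - (p.1 + p.2)).toNat p q (by omega)
  · have hle : ¬(p.1 ≤ q.1 ∧ p.2 ≤ q.2) := by omega
    rw [path_empty_of_not_le hle]
    refine ⟨Set.finite_empty, ?_⟩
    rw [Set.ncard_empty, chooseInt, if_neg (by omega)]
    simp

end LGV

namespace LGV

lemma path_split {p q c : ℤ × ℤ} {l1 l2 : List (ℤ × ℤ)}
    (h : IsLatticePath p q (l1 ++ c :: l2)) :
    IsLatticePath p c (l1 ++ [c]) ∧ IsLatticePath c q (c :: l2) := by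
  obtain ⟨h1, h2, h3⟩ := h
  change List.IsChain _ _ at h3
  rw [List.isChain_split] at h3
  constructor
  · refine ⟨?_, ?_, h3.1⟩
    · rw [List.head?_append] at h1 ⊢
      simpa using h1
    · exact List.getLast?_concat
  · refine ⟨rfl, ?_, h3.2⟩
    rw [List.getLast?_append] at h2
    simpa using h2

lemma path_glue {p q c : ℤ × ℤ} {l1 l2 : List (ℤ × ℤ)}
    (h1 : IsLatticePath p c (l1 ++ [c])) (h2 : IsLatticePath c q (c :: l2)) :
    IsLatticePath p q (l1 ++ c :: l2) := by
  refine ⟨?_, ?_, List.isChain_split.2 ⟨h1.2.2, h2.2.2⟩⟩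
  · have := h1.1
    rw [List.head?_append] at this ⊢
    simpa using this
  · rw [List.getLast?_append]
    have := h2.2.1
    rw [this]
    rfl

end LGV

namespace LGV

lemma cross_aux : ∀ (n : ℕ) (A B : List (ℤ × ℤ)) (p q r s : ℤ × ℤ),
    A.length + B.length ≤ n →
    IsLatticePath p q A → IsLatticePath r s B →
    p.1 ≤ r.1 → r.2 ≤ p.2 → s.1 ≤ q.1 → q.2 ≤ s.2 →
    ∃ c, c ∈ A ∧ c ∈ B := by
  intro n
  induction n with
  | zero =>
    intro A B p q r s hlen hA hB _ _ _ _
    have := path_ne_nil hA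
    have : 1 ≤ A.length := List.length_pos_iff.2 this
    omega
  | succ n ih =>
    intro A B p q r s hlen hA hB h1 h2 h3 h4
    match A with
    | [] => exact absurd rfl (path_ne_nil hA)
    | [x] =>
      obtain ⟨hp, hq⟩ := path_singleton_iff.1 hA
      subst hp
      -- p = q = x ; B is vertical through p
      obtain ⟨hr1, _⟩ := path_mono hB
      have hq1 : q.1 = p.1 := by rw [hq]
      have hq2 : q.2 = p.2 := by rw [hq]
      have heq : p.1 = r.1 ∧ r.1 = s.1 := by omega
      obtain ⟨z, hzB, hzl⟩ := exists_mem_level hB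
        (t := p.1 + p.2) (by omega) (by omega)
      have hzb := path_mem_bounds hB hzB
      have hz : z = p := by
        have : z.1 = p.1 := by omega
        have : z.2 = p.2 := by omega
        exact Prod.ext (by omega) this
      exact ⟨p, by simp, hz ▸ hzB⟩
    | x :: a2 :: A'' =>
      match B with
      | [] => exact absurd rfl (path_ne_nil hB)
      | [y] =>
        obtain ⟨hr, hs⟩ := path_singleton_iff.1 hB
        subst hr
        obtain ⟨_, hp2⟩ := path_mono hA
        have hs1 : s.1 = r.1 := by rw [hs]
        have hs2 : s.2 = r.2 := by rw [hs]
        have heq : p.2 = r.2 ∧ r.2 = q.2 := by omega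
        obtain ⟨z, hzA, hzl⟩ := exists_mem_level hA
          (t := r.1 + r.2) (by omega) (by omega)
        have hzb := path_mem_bounds hA hzA
        have hz : z = r := by
          have : z.2 = r.2 := by omega
          exact Prod.ext (by omega) this
        exact ⟨r, hz ▸ hzA, by simp⟩
      | y :: b2 :: B'' =>
        obtain ⟨hxp, hsA, hpA⟩ := path_cons hA
        obtain ⟨hyr, hsB, hpB⟩ := path_cons hB
        subst hxp; subst hyr
        by_cases hpr : x = y
        · exact ⟨x, by simp, by simp [hpr]⟩
        have hne : ¬(x.1 = y.1 ∧ x.2 = y.2) := fun h => hpr (Prod.ext h.1 h.2)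
        by_cases h5 : x.1 < y.1
        · have hm := step_mono hsA
          obtain ⟨c, hc1, hc2⟩ := ih (a2 :: A'') (y :: b2 :: B'') a2 q y s
            (by simp at hlen ⊢; omega) hpA hB (by omega) (by omega) h3 h4
          exact ⟨c, List.mem_cons_of_mem _ hc1, hc2⟩
        · have h6 : y.2 < x.2 := by omega
          have hm := step_mono hsB
          obtain ⟨c, hc1, hc2⟩ := ih (x :: a2 :: A'') (b2 :: B'') x q b2 s
            (by simp at hlen ⊢; omega) hA hpB (by omega) (by omega) h3 h4
          exact ⟨c, hc1, List.mem_cons_of_mem _ hc2⟩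

lemma cross {A B : List (ℤ × ℤ)} {p q r s : ℤ × ℤ}
    (hA : IsLatticePath p q A) (hB : IsLatticePath r s B)
    (h1 : p.1 ≤ r.1) (h2 : r.2 ≤ p.2) (h3 : s.1 ≤ q.1) (h4 : q.2 ≤ s.2) :
    ∃ c, c ∈ A ∧ c ∈ B :=
  cross_aux (A.length + B.length) A B p q r s le_rfl hA hB h1 h2 h3 h4

end LGV

namespace LGV

def swapPair (A B : List (ℤ × ℤ)) : List (ℤ × ℤ) × List (ℤ × ℤ) :=
  if A.dropWhile (fun x => decide (x ∉ B)) = [] then (A, B)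
  else
    (A.takeWhile (fun x => decide (x ∉ B)) ++
       B.dropWhile (fun x => decide (x ≠ (A.dropWhile (fun x => decide (x ∉ B))).headI)),
     B.takeWhile (fun x => decide (x ≠ (A.dropWhile (fun x => decide (x ∉ B))).headI)) ++
       A.dropWhile (fun x => decide (x ∉ B)))

lemma swap_spec {p q r s : ℤ × ℤ} {A B : List (ℤ × ℤ)}
    (hA : IsLatticePath p q A) (hB : IsLatticePath r s B)
    (hx : ∃ z ∈ A, z ∈ B) :
    IsLatticePath p s (swapPair A B).1 ∧ IsLatticePath r q (swapPair A B).2 ∧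
      (∃ z, z ∈ (swapPair A B).1 ∧ z ∈ (swapPair A B).2) ∧
      swapPair (swapPair A B).1 (swapPair A B).2 = (A, B) := by
  classical
  have hADne : A.dropWhile (fun x => decide (x ∉ B)) ≠ [] := by
    rw [Ne, List.dropWhile_eq_nil_iff]
    push_neg
    obtain ⟨z, hz1, hz2⟩ := hx
    exact ⟨z, hz1, by simp [hz2]⟩
  obtain ⟨c, A2, hAD⟩ := List.exists_cons_of_ne_nil hADne
  have hcB : c ∈ B := by
    have h := List.head_dropWhile_not (fun x => decide (x ∉ B)) hADne
    have hh : (A.dropWhile (fun x => decide (x ∉ B))).head hADne = c := by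
      rw [← List.cons_head_tail hADne] at hAD
      exact (List.cons.injEq _ _ _ _ ▸ hAD).1
    rw [hh] at h
    simpa using h
  have hBDne : B.dropWhile (fun x => decide (x ≠ c)) ≠ [] := by
    rw [Ne, List.dropWhile_eq_nil_iff]
    push_neg
    exact ⟨c, hcB, by simp⟩
  obtain ⟨c', B2, hBD⟩ := List.exists_cons_of_ne_nil hBDne
  have hc' : c' = c := by
    have h := List.head_dropWhile_not (fun x => decide (x ≠ c)) hBDne
    have hh : (B.dropWhile (fun x => decide (x ≠ c))).head hBDne = c' := by
      rw [← List.cons_head_tail hBDne] at hBD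
      exact (List.cons.injEq _ _ _ _ ▸ hBD).1
    rw [hh] at h
    simpa using h
  subst hc'
  set A1 := A.takeWhile (fun x => decide (x ∉ B)) with hA1
  set B1 := B.takeWhile (fun x => decide (x ≠ c')) with hB1
  have hAsplit : A = A1 ++ c' :: A2 := by
    conv_lhs => rw [← List.takeWhile_append_dropWhile (p := fun x => decide (x ∉ B)) (l := A)]
    rw [hAD]
  have hBsplit : B = B1 ++ c' :: B2 := by
    conv_lhs => rw [← List.takeWhile_append_dropWhile (p := fun x => decide (x ≠ c')) (l := B)]
    rw [hBD]
  have hswap : swapPair A B = (A1 ++ c' :: B2, B1 ++ c' :: A2) := by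
    rw [swapPair, if_neg hADne, hAD]
    simp only [List.headI]
    show (A1 ++ B.dropWhile (fun x => decide (x ≠ c')), B1 ++ c' :: A2) = _
    rw [hBD]
  -- basic membership facts
  have hA1nB : ∀ x ∈ A1, x ∉ B := by
    intro x hxm
    have := List.mem_takeWhile_imp hxm
    simpa using this
  have hB1nc : ∀ x ∈ B1, x ≠ c' := by
    intro x hxm
    have := List.mem_takeWhile_imp hxm
    simpa using this
  -- the split paths
  have hSA := path_split (hAsplit ▸ hA)
  have hSB := path_split (hBsplit ▸ hB)
  have hA' : IsLatticePath p s (A1 ++ c' :: B2) := path_glue hSA.1 hSB.2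
  have hB' : IsLatticePath r q (B1 ++ c' :: A2) := path_glue hSB.1 hSA.2
  -- nodup facts
  have hnodupA : (A1 ++ c' :: A2).Nodup := hAsplit ▸ path_nodup hA
  have hdisjA : ∀ x ∈ A1, x ∉ c' :: A2 := by
    intro x hx1
    exact List.disjoint_of_nodup_append hnodupA hx1
  -- compute swapPair of the new pair
  have hmemB' : c' ∈ B1 ++ c' :: A2 := by simp
  have hA1nB' : ∀ x ∈ A1, x ∉ B1 ++ c' :: A2 := by
    intro x hx1 hmem
    rcases List.mem_append.1 hmem with hm | hm
    · exact hA1nB x hx1 ((List.takeWhile_sublist _).subset hm)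
    · exact hdisjA x hx1 hm
  have step1 : (A1 ++ c' :: B2).dropWhile (fun x => decide (x ∉ B1 ++ c' :: A2))
      = c' :: B2 := by
    rw [List.dropWhile_append_of_pos (by intro a ha; simpa using hA1nB' a ha)]
    rw [List.dropWhile_cons_of_neg (by simpa using hmemB')]
  have step2 : (A1 ++ c' :: B2).takeWhile (fun x => decide (x ∉ B1 ++ c' :: A2)) = A1 := by
    rw [List.takeWhile_append_of_pos (by intro a ha; simpa using hA1nB' a ha)]
    rw [List.takeWhile_cons_of_neg (by simpa using hmemB')]
    simp
  have step3 : (B1 ++ c' :: A2).dropWhile (fun x => decide (x ≠ c')) = c' :: A2 := by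
    rw [List.dropWhile_append_of_pos (by intro a ha; simpa using hB1nc a ha)]
    rw [List.dropWhile_cons_of_neg (by simp)]
  have step4 : (B1 ++ c' :: A2).takeWhile (fun x => decide (x ≠ c')) = B1 := by
    rw [List.takeWhile_append_of_pos (by intro a ha; simpa using hB1nc a ha)]
    rw [List.takeWhile_cons_of_neg (by simp)]
    simp
  have hinv : swapPair (A1 ++ c' :: B2) (B1 ++ c' :: A2) = (A, B) := by
    rw [swapPair, if_neg (by rw [step1]; simp)]
    rw [step1]
    simp only [List.headI]
    show ((A1 ++ c' :: B2).takeWhile (fun x => decide (x ∉ B1 ++ c' :: A2)) ++ (B1 ++ c' :: A2).dropWhile (fun x => decide (x ≠ c')), (B1 ++ c' :: A2).takeWhile (fun x => decide (x ≠ c')) ++ c' :: B2) = _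
    rw [step2, step3, step4]
    rw [Prod.mk.injEq]
    exact ⟨hAsplit.symm, hBsplit.symm⟩
  rw [hswap]
  exact ⟨hA', hB', ⟨c', by simp, by simp⟩, hinv⟩

end LGV

namespace LGV

lemma ncard_prod {α β : Type*} (s : Set α) (t : Set β) :
    (s ×ˢ t).ncard = s.ncard * t.ncard := by
  rw [← Nat.card_coe_set_eq, Nat.card_congr (Equiv.Set.prod s t), Nat.card_prod,
    Nat.card_coe_set_eq, Nat.card_coe_set_eq]

end LGV

open LGV

theorem stmt_14 (a₁ a₂ a₁' a₂' b₁ b₂ b₁' b₂' : ℤ)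
    (ha : a₁ ≤ a₂) (ha' : a₂' ≤ a₁') (hb : b₁ ≤ b₂) (hb' : b₂' ≤ b₁') :
    (({p : List (ℤ × ℤ) × List (ℤ × ℤ) |
        IsLatticePath (a₁, a₁') (b₁, b₁') p.1 ∧
        IsLatticePath (a₂, a₂') (b₂, b₂') p.2 ∧
        ∀ x ∈ p.1, x ∉ p.2}).ncard : ℤ)
      = Matrix.det
          !![chooseInt (b₁ - a₁ + b₁' - a₁') (b₁ - a₁),
              chooseInt (b₂ - a₁ + b₂' - a₁') (b₂ - a₁);
            chooseInt (b₁ - a₂ + b₁' - a₂') (b₁ - a₂),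
              chooseInt (b₂ - a₂ + b₂' - a₂') (b₂ - a₂)] := by
  classical
  set S11 := {L | IsLatticePath (a₁, a₁') (b₁, b₁') L} with hS11
  set S22 := {L | IsLatticePath (a₂, a₂') (b₂, b₂') L} with hS22
  set S12 := {L | IsLatticePath (a₁, a₁') (b₂, b₂') L} with hS12
  set S21 := {L | IsLatticePath (a₂, a₂') (b₁, b₁') L} with hS21
  obtain ⟨hf11, hc11⟩ := path_count' (a₁, a₁') (b₁, b₁')
  obtain ⟨hf22, hc22⟩ := path_count' (a₂, a₂') (b₂, b₂')
  obtain ⟨hf12, hc12⟩ := path_count' (a₁, a₁') (b₂, b₂')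
  obtain ⟨hf21, hc21⟩ := path_count' (a₂, a₂') (b₁, b₁')
  set D := {p : List (ℤ × ℤ) × List (ℤ × ℤ) |
      IsLatticePath (a₁, a₁') (b₁, b₁') p.1 ∧
      IsLatticePath (a₂, a₂') (b₂, b₂') p.2 ∧
      ∀ x ∈ p.1, x ∉ p.2} with hD
  set X := (S11 ×ˢ S22) ∩ {P : List (ℤ × ℤ) × List (ℤ × ℤ) | ∃ z, z ∈ P.1 ∧ z ∈ P.2} with hX
  have hprodfin : (S11 ×ˢ S22).Finite := hf11.prod hf22
  have hXfin : X.Finite := hprodfin.subset Set.inter_subset_left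
  have hDsub : D ⊆ S11 ×ˢ S22 := by
    rintro ⟨A, B⟩ ⟨h1, h2, _⟩
    exact ⟨h1, h2⟩
  have hDfin : D.Finite := hprodfin.subset hDsub
  have hunion : D ∪ X = S11 ×ˢ S22 := by
    ext ⟨A, B⟩
    simp only [hD, hX, Set.mem_union, Set.mem_inter_iff, Set.mem_setOf_eq, Set.mem_prod,
      hS11, hS22]
    constructor
    · rintro (⟨h1, h2, _⟩ | ⟨⟨h1, h2⟩, _⟩) <;> exact ⟨h1, h2⟩
    · rintro ⟨h1, h2⟩
      by_cases hz : ∃ z, z ∈ A ∧ z ∈ B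
      · exact Or.inr ⟨⟨h1, h2⟩, hz⟩
      · push_neg at hz
        exact Or.inl ⟨h1, h2, hz⟩
  have hdisj : Disjoint D X := by
    rw [Set.disjoint_left]
    rintro ⟨A, B⟩ ⟨_, _, h3⟩ ⟨_, z, hz1, hz2⟩
    exact h3 z hz1 hz2
  have hsplit : D.ncard + X.ncard = (S11 ×ˢ S22).ncard := by
    rw [← hunion, Set.ncard_union_eq hdisj hDfin hXfin]
  -- bijection between X and S12 ×ˢ S21
  have hbij : Set.BijOn (fun P : List (ℤ × ℤ) × List (ℤ × ℤ) => swapPair P.1 P.2)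
      X (S12 ×ˢ S21) := by
    refine ⟨?_, ?_, ?_⟩
    · rintro ⟨A, B⟩ ⟨⟨h1, h2⟩, hz⟩
      obtain ⟨hp1, hp2, _, _⟩ := swap_spec h1 h2 hz
      exact ⟨hp1, hp2⟩
    · rintro ⟨A, B⟩ ⟨⟨h1, h2⟩, hz⟩ ⟨A', B'⟩ ⟨⟨h1', h2'⟩, hz'⟩ heq
      obtain ⟨_, _, _, hinv⟩ := swap_spec h1 h2 hz
      obtain ⟨_, _, _, hinv'⟩ := swap_spec h1' h2' hz'
      simp only at heq
      have : (A, B) = (A', B') := by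
        rw [← hinv, ← hinv', heq]
      exact this
    · rintro ⟨A, B⟩ ⟨h1, h2⟩
      simp only [hS12, Set.mem_setOf_eq] at h1
      simp only [hS21, Set.mem_setOf_eq] at h2
      have hz : ∃ z, z ∈ A ∧ z ∈ B := by
        obtain ⟨c, hc1, hc2⟩ := cross h1 h2 (by simpa using ha) (by simpa using ha')
          (by simpa using hb) (by simpa using hb')
        exact ⟨c, hc1, hc2⟩
      obtain ⟨hp1, hp2, hz', hinv⟩ := swap_spec h1 h2 hz
      refine ⟨swapPair A B, ⟨⟨hp1, hp2⟩, hz'⟩, ?_⟩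
      simpa using hinv
  have hXcard : X.ncard = (S12 ×ˢ S21).ncard := by
    rw [← hbij.image_eq, Set.ncard_image_of_injOn hbij.injOn]
  rw [Matrix.det_fin_two_of]
  -- identify the chooseInt values
  have g11 : ((S11.ncard : ℤ)) = chooseInt (b₁ - a₁ + b₁' - a₁') (b₁ - a₁) := by
    rw [hc11]; congr 1; ring
  have g22 : ((S22.ncard : ℤ)) = chooseInt (b₂ - a₂ + b₂' - a₂') (b₂ - a₂) := by
    rw [hc22]; congr 1; ring
  have g12 : ((S12.ncard : ℤ)) = chooseInt (b₂ - a₁ + b₂' - a₁') (b₂ - a₁) := by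
    rw [hc12]; congr 1; ring
  have g21 : ((S21.ncard : ℤ)) = chooseInt (b₁ - a₂ + b₁' - a₂') (b₁ - a₂) := by
    rw [hc21]; congr 1; ring
  rw [← g11, ← g22, ← g12, ← g21]
  have e1 : (D.ncard : ℤ) + X.ncard = (S11.ncard : ℤ) * S22.ncard := by
    rw [ncard_prod] at hsplit
    exact_mod_cast congrArg (Nat.cast (R := ℤ)) hsplit
  have e2 : (X.ncard : ℤ) = (S12.ncard : ℤ) * S21.ncard := by
    rw [ncard_prod] at hXcard
    exact_mod_cast congrArg (Nat.cast (R := ℤ)) hXcard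
  linarith
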